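/- arXiv:math/0202173 — 7 statements merged into one kernel-verified Lean document; each statement's English description precedes it below -/
import Mathlib

section
/- Let η ∈ ℂ be a primitive 5th root of unity and let C = {(v0 : v1 : v2) ∈ ℙ²(ℂ) : v0⁵ + v1·v2⁴ + v2·v1⁴ = 0}. The projective automorphism σ of ℙ²(ℂ) induced by the invertible linear map (v0, v1, v2) ↦ (v0, η·v1, η·v2) maps C into itself, and the fixed points of σ lying on C are exactly the points of C with v0 = 0, namely the five points (0:0:1), (0:1:0), (0:−1:1), (0:−ζ:1), (0:−ζ²:1), where ζ is a primitive cube root of unity. -/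
noncomputable def Qv (v : Fin 3 → ℂ) : ℂ := v 0 ^ 5 + v 1 * v 2 ^ 4 + v 2 * v 1 ^ 4

lemma Qv_smul (a : ℂ) (v : Fin 3 → ℂ) : Qv (a • v) = a ^ 5 * Qv v := by
  simp only [Qv, Pi.smul_apply, smul_eq_mul]; ring

lemma vec_eq_zero (v : Fin 3 → ℂ) (h0 : v 0 = 0) (h1 : v 1 = 0) (h2 : v 2 = 0) : v = 0 := by
  funext i; fin_cases i <;> simpa

lemma cube_roots (ζ : ℂ) (hζ : IsPrimitiveRoot ζ 3) (x : ℂ) (hx : x ^ 3 = 1) :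
    x = 1 ∨ x = ζ ∨ x = ζ ^ 2 := by
  have hζ3 : ζ ^ 3 = 1 := hζ.pow_eq_one
  have hζ1 : ζ ≠ 1 := hζ.ne_one (by norm_num)
  have hsum : 1 + ζ + ζ ^ 2 = 0 := by
    have h : (ζ - 1) * (1 + ζ + ζ ^ 2) = 0 := by linear_combination hζ3
    rcases mul_eq_zero.1 h with h | h
    · exact absurd (sub_eq_zero.1 h) hζ1
    · exact h
  have h : (x - 1) * ((x - ζ) * (x - ζ ^ 2)) = 0 := by
    linear_combination hx + (x - x ^ 2) * hsum + (x - 1) * hζ3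
  rcases mul_eq_zero.1 h with h | h
  · exact Or.inl (sub_eq_zero.1 h)
  · rcases mul_eq_zero.1 h with h | h
    · exact Or.inr (Or.inl (sub_eq_zero.1 h))
    · exact Or.inr (Or.inr (sub_eq_zero.1 h))

/-- The point `(0 : b : 1)` of `ℙ²(ℂ)`. -/
noncomputable def ptb (b : ℂ) : Projectivization ℂ (Fin 3 → ℂ) :=
  Projectivization.mk ℂ ![0, b, 1] (by intro h; simpa using congrFun h 2)

/-- The point `(0 : 1 : 0)` of `ℙ²(ℂ)`. -/
noncomputable def pt010 : Projectivization ℂ (Fin 3 → ℂ) :=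
  Projectivization.mk ℂ ![0, 1, 0] (by intro h; simpa using congrFun h 1)

/-- Let `η` be a primitive 5th root of unity and `C ⊂ ℙ²(ℂ)` the plane quintic
`v0⁵ + v1 v2⁴ + v2 v1⁴ = 0`.  The projective automorphism `σ` induced by
`(v0, v1, v2) ↦ (v0, η v1, η v2)` maps `C` into itself, and the fixed points of `σ`
on `C` are exactly the points of `C` with `v0 = 0`, namely the five points
`(0:0:1), (0:1:0), (0:−1:1), (0:−ζ:1), (0:−ζ²:1)` with `ζ` a primitive cube root
of unity. -/
theorem sigma_fixed_points_on_quintic (η ζ : ℂ)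
    (hη : IsPrimitiveRoot η 5) (hζ : IsPrimitiveRoot ζ 3)
    (C : Set (Projectivization ℂ (Fin 3 → ℂ)))
    (hC : C = {p | ∀ (v : Fin 3 → ℂ) (hv : v ≠ 0), Projectivization.mk ℂ v hv = p →
        v 0 ^ 5 + v 1 * v 2 ^ 4 + v 2 * v 1 ^ 4 = 0})
    (σ : Projectivization ℂ (Fin 3 → ℂ) → Projectivization ℂ (Fin 3 → ℂ))
    (hσ : ∀ (v : Fin 3 → ℂ) (hv : v ≠ 0)
        (hv' : (fun i => ![(1 : ℂ), η, η] i * v i) ≠ 0),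
        σ (Projectivization.mk ℂ v hv) =
          Projectivization.mk ℂ (fun i => ![(1 : ℂ), η, η] i * v i) hv') :
    (∀ p ∈ C, σ p ∈ C) ∧
    {p | p ∈ C ∧ σ p = p} =
      {p | p ∈ C ∧ ∀ (v : Fin 3 → ℂ) (hv : v ≠ 0),
        Projectivization.mk ℂ v hv = p → v 0 = 0} ∧
    {p | p ∈ C ∧ σ p = p} =
      {ptb 0, pt010, ptb (-1), ptb (-ζ), ptb (-ζ ^ 2)} := by
  have hη5 : η ^ 5 = 1 := hη.pow_eq_one
  have hη1 : η ≠ 1 := hη.ne_one (by norm_num)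
  have hηne : η ≠ 0 := hη.ne_zero (by norm_num)
  subst hC
  -- membership in C via `Qv` of a single representative
  have memC : ∀ (v : Fin 3 → ℂ) (hv : v ≠ 0),
      (Projectivization.mk ℂ v hv ∈
        {p | ∀ (w : Fin 3 → ℂ) (hw : w ≠ 0), Projectivization.mk ℂ w hw = p →
          w 0 ^ 5 + w 1 * w 2 ^ 4 + w 2 * w 1 ^ 4 = 0}) ↔ Qv v = 0 := by
    intro v hv
    constructor
    · intro h; exact h v hv rfl
    · intro h w hw hmk
      rw [Projectivization.mk_eq_mk_iff] at hmk
      obtain ⟨a, ha⟩ := hmk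
      rw [Units.smul_def] at ha
      have : Qv w = 0 := by rw [← ha, Qv_smul, h, mul_zero]
      simpa [Qv] using this
  -- the scaled vector of a nonzero vector is nonzero
  have scaled_ne : ∀ (v : Fin 3 → ℂ), v ≠ 0 →
      (fun i => ![(1 : ℂ), η, η] i * v i) ≠ 0 := by
    intro v hv h
    apply hv
    apply vec_eq_zero
    · simpa using congrFun h 0
    · have := congrFun h 1; simp at this; tauto
    · have := congrFun h 2; simp at this; tauto
  -- Part 1
  have part1 : ∀ p ∈ {p | ∀ (w : Fin 3 → ℂ) (hw : w ≠ 0),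
      Projectivization.mk ℂ w hw = p → w 0 ^ 5 + w 1 * w 2 ^ 4 + w 2 * w 1 ^ 4 = 0},
      σ p ∈ {p | ∀ (w : Fin 3 → ℂ) (hw : w ≠ 0),
      Projectivization.mk ℂ w hw = p → w 0 ^ 5 + w 1 * w 2 ^ 4 + w 2 * w 1 ^ 4 = 0} := by
    intro p hp
    set v := p.rep with hvdef
    have hv : v ≠ 0 := p.rep_nonzero
    have hQ : Qv v = 0 := (memC v hv).1 (by rw [Projectivization.mk_rep]; exact hp)
    rw [← Projectivization.mk_rep p, hσ v hv (scaled_ne v hv)]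
    rw [memC _ (scaled_ne v hv)]
    simp only [Qv, Matrix.cons_val_zero, Matrix.cons_val_one, Matrix.head_cons,
      Matrix.cons_val_two, Matrix.tail_cons]
    simp only [Qv] at hQ
    linear_combination hQ + (v 1 * v 2 ^ 4 + v 2 * v 1 ^ 4) * hη5
  -- Part 2
  have part2 : {p | p ∈ {p | ∀ (w : Fin 3 → ℂ) (hw : w ≠ 0),
        Projectivization.mk ℂ w hw = p → w 0 ^ 5 + w 1 * w 2 ^ 4 + w 2 * w 1 ^ 4 = 0}
        ∧ σ p = p} =
      {p | p ∈ {p | ∀ (w : Fin 3 → ℂ) (hw : w ≠ 0),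
        Projectivization.mk ℂ w hw = p → w 0 ^ 5 + w 1 * w 2 ^ 4 + w 2 * w 1 ^ 4 = 0}
        ∧ ∀ (v : Fin 3 → ℂ) (hv : v ≠ 0),
        Projectivization.mk ℂ v hv = p → v 0 = 0} := by
    ext p
    simp only [Set.mem_setOf_eq]
    set v := p.rep with hvdef
    have hv : v ≠ 0 := p.rep_nonzero
    constructor
    · rintro ⟨hp, hfix⟩
      refine ⟨hp, ?_⟩
      have hQ : Qv v = 0 := (memC v hv).1 (by rw [Projectivization.mk_rep]; exact hp)
      have hfix' : Projectivization.mk ℂ (fun i => ![(1 : ℂ), η, η] i * v i)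
          (scaled_ne v hv) = Projectivization.mk ℂ v hv := by
        rw [← hσ v hv (scaled_ne v hv), Projectivization.mk_rep]; exact hfix
      rw [Projectivization.mk_eq_mk_iff] at hfix'
      obtain ⟨a, ha⟩ := hfix'
      rw [Units.smul_def] at ha
      have h0 : (a : ℂ) * v 0 = v 0 := by simpa using congrFun ha 0
      have h1 : (a : ℂ) * v 1 = η * v 1 := by simpa using congrFun ha 1
      have h2 : (a : ℂ) * v 2 = η * v 2 := by simpa using congrFun ha 2
      have hv0 : v 0 = 0 := by
        by_contra hne
        have ha1 : (a : ℂ) = 1 := by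
          have h : ((a : ℂ) - 1) * v 0 = 0 := by linear_combination h0
          rcases mul_eq_zero.1 h with h | h
          · exact sub_eq_zero.1 h
          · exact absurd h hne
        rw [ha1, one_mul] at h1 h2
        have hv1 : v 1 = 0 := by
          by_contra hv1
          exact hη1 (mul_right_cancel₀ hv1 (show η * v 1 = 1 * v 1 by
            rw [one_mul]; exact h1.symm))
        have hv2 : v 2 = 0 := by
          by_contra hv2
          exact hη1 (mul_right_cancel₀ hv2 (show η * v 2 = 1 * v 2 by
            rw [one_mul]; exact h2.symm))
        apply hne
        have : v 0 ^ 5 = 0 := by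
          simp only [Qv, hv1, hv2] at hQ; linear_combination hQ
        exact pow_eq_zero_iff (by norm_num) |>.1 this
      intro w hw hmk
      rw [← Projectivization.mk_rep p, Projectivization.mk_eq_mk_iff] at hmk
      obtain ⟨b, hb⟩ := hmk
      have := congrFun hb 0
      simp only [Units.smul_def, Pi.smul_apply, smul_eq_mul, ← hvdef, hv0,
        mul_zero] at this
      exact this.symm
    · rintro ⟨hp, h0⟩
      refine ⟨hp, ?_⟩
      have hv0 : v 0 = 0 := h0 v hv (Projectivization.mk_rep p)
      conv_lhs => rw [← Projectivization.mk_rep p, hσ v hv (scaled_ne v hv)]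
      rw [← Projectivization.mk_rep p, Projectivization.mk_eq_mk_iff]
      refine ⟨Units.mk0 η hηne, ?_⟩
      funext i
      fin_cases i <;>
        simp [← hvdef, hv0]
  refine ⟨part1, part2, ?_⟩
  rw [part2]
  -- Part 3
  have hζ3 : ζ ^ 3 = 1 := hζ.pow_eq_one
  -- the five candidate points are in the RHS set
  have hptb : ∀ b : ℂ, b + b ^ 4 = 0 →
      ptb b ∈ {p | p ∈ {p | ∀ (w : Fin 3 → ℂ) (hw : w ≠ 0),
        Projectivization.mk ℂ w hw = p → w 0 ^ 5 + w 1 * w 2 ^ 4 + w 2 * w 1 ^ 4 = 0}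
        ∧ ∀ (v : Fin 3 → ℂ) (hv : v ≠ 0),
        Projectivization.mk ℂ v hv = p → v 0 = 0} := by
    intro b hb
    constructor
    · rw [ptb, memC]
      simp only [Qv, Matrix.cons_val_zero, Matrix.cons_val_one, Matrix.head_cons,
        Matrix.cons_val_two, Matrix.tail_cons]
      linear_combination hb
    · intro w hw hmk
      rw [ptb, Projectivization.mk_eq_mk_iff] at hmk
      obtain ⟨a, ha⟩ := hmk
      have := congrFun ha 0
      simpa using this.symm
  have h010 : pt010 ∈ {p | p ∈ {p | ∀ (w : Fin 3 → ℂ) (hw : w ≠ 0),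
        Projectivization.mk ℂ w hw = p → w 0 ^ 5 + w 1 * w 2 ^ 4 + w 2 * w 1 ^ 4 = 0}
        ∧ ∀ (v : Fin 3 → ℂ) (hv : v ≠ 0),
        Projectivization.mk ℂ v hv = p → v 0 = 0} := by
    constructor
    · rw [pt010, memC]
      simp [Qv]
    · intro w hw hmk
      rw [pt010, Projectivization.mk_eq_mk_iff] at hmk
      obtain ⟨a, ha⟩ := hmk
      have := congrFun ha 0
      simpa using this.symm
  ext p
  simp only [Set.mem_setOf_eq, Set.mem_insert_iff, Set.mem_singleton_iff]
  constructor
  · rintro ⟨hp, h0⟩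
    set v := p.rep with hvdef
    have hv : v ≠ 0 := p.rep_nonzero
    have hQ : Qv v = 0 := (memC v hv).1 (by rw [Projectivization.mk_rep]; exact hp)
    have hv0 : v 0 = 0 := h0 v hv (Projectivization.mk_rep p)
    have hQ' : v 1 * v 2 * (v 2 ^ 3 + v 1 ^ 3) = 0 := by
      simp only [Qv, hv0] at hQ; linear_combination hQ
    by_cases hv2 : v 2 = 0
    · -- p = pt010
      have hv1 : v 1 ≠ 0 := fun h => hv (vec_eq_zero v hv0 h hv2)
      right; left
      rw [pt010, ← Projectivization.mk_rep p, Projectivization.mk_eq_mk_iff]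
      refine ⟨Units.mk0 (v 1) hv1, ?_⟩
      funext i
      fin_cases i <;> simp [← hvdef, hv0, hv2]
    · by_cases hv1 : v 1 = 0
      · -- p = ptb 0
        left
        rw [ptb, ← Projectivization.mk_rep p, Projectivization.mk_eq_mk_iff]
        refine ⟨Units.mk0 (v 2) hv2, ?_⟩
        funext i
        fin_cases i <;> simp [← hvdef, hv0, hv1]
      · -- p = ptb (v 1 / v 2), with cube condition
        have hsum3 : v 2 ^ 3 + v 1 ^ 3 = 0 := by
          rcases mul_eq_zero.1 hQ' with h | h
          · rcases mul_eq_zero.1 h with h | h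
            · exact absurd h hv1
            · exact absurd h hv2
          · exact h
        have hpeq : p = ptb (v 1 / v 2) := by
          rw [ptb, ← Projectivization.mk_rep p, Projectivization.mk_eq_mk_iff]
          refine ⟨Units.mk0 (v 2) hv2, ?_⟩
          funext i
          fin_cases i <;> simp [← hvdef, hv0]
          field_simp
        have hcube : (-(v 1 / v 2)) ^ 3 = 1 := by
          field_simp
          linear_combination (-1 : ℂ) * hsum3
        rcases cube_roots ζ hζ _ hcube with h | h | h
        · right; right; left
          rw [hpeq]; congr 1; linear_combination -h
        · right; right; right; left
          rw [hpeq]; congr 1; linear_combination -h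
        · right; right; right; right
          rw [hpeq]; congr 1; linear_combination -h
  · rintro (rfl | rfl | rfl | rfl | rfl)
    · exact hptb 0 (by ring)
    · exact h010
    · exact hptb (-1) (by ring)
    · exact hptb (-ζ) (by linear_combination ζ * hζ3)
    · exact hptb (-ζ ^ 2) (by linear_combination (ζ ^ 5 + ζ ^ 2) * hζ3)
end

section
/- The set of u ∈ ℂ for which there exist α, β ∈ ℂ with α³ + uα + 1 = 0 and β³ + uβ + 1 = 0 such that the element ((β/α)⁵, 1, α⁵, β⁻⁵, 1) of the group (ℂˣ)⁵ has finite order is countable. Consequently, for all u outside some countable subset of ℂ and any two roots α, β of z³ + uz + 1, the element ((β/α)⁵, 1, α⁵, β⁻⁵, 1) ∈ (ℂˣ)⁵ has infinite order. -/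
/-- The set of `u ∈ ℂ` for which there exist roots `α, β` of `z³ + uz + 1` such that
the tame symbol `((β/α)⁵, 1, α⁵, β⁻⁵, 1) ∈ (ℂˣ)⁵` has finite order is countable;
consequently, outside this countable set the tame symbol has infinite order for any
two roots `α, β`. -/
theorem tame_symbol_infinite_order_off_countable :
    {u : ℂ | ∃ (α β : ℂ) (hα : α ≠ 0) (hβ : β ≠ 0),
        α ^ 3 + u * α + 1 = 0 ∧ β ^ 3 + u * β + 1 = 0 ∧
        IsOfFinOrder (![(Units.mk0 β hβ / Units.mk0 α hα) ^ 5, 1,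
          (Units.mk0 α hα) ^ 5, ((Units.mk0 β hβ)⁻¹) ^ 5, 1] : Fin 5 → ℂˣ)}.Countable ∧
    ∀ u : ℂ,
      u ∉ {u : ℂ | ∃ (α β : ℂ) (hα : α ≠ 0) (hβ : β ≠ 0),
        α ^ 3 + u * α + 1 = 0 ∧ β ^ 3 + u * β + 1 = 0 ∧
        IsOfFinOrder (![(Units.mk0 β hβ / Units.mk0 α hα) ^ 5, 1,
          (Units.mk0 α hα) ^ 5, ((Units.mk0 β hβ)⁻¹) ^ 5, 1] : Fin 5 → ℂˣ)} →
      ∀ (α β : ℂ) (hα : α ≠ 0) (hβ : β ≠ 0),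
        α ^ 3 + u * α + 1 = 0 → β ^ 3 + u * β + 1 = 0 →
        ¬ IsOfFinOrder (![(Units.mk0 β hβ / Units.mk0 α hα) ^ 5, 1,
          (Units.mk0 α hα) ^ 5, ((Units.mk0 β hβ)⁻¹) ^ 5, 1] : Fin 5 → ℂˣ) := by
  constructor
  · have hsub : {u : ℂ | ∃ (α β : ℂ) (hα : α ≠ 0) (hβ : β ≠ 0),
        α ^ 3 + u * α + 1 = 0 ∧ β ^ 3 + u * β + 1 = 0 ∧
        IsOfFinOrder (![(Units.mk0 β hβ / Units.mk0 α hα) ^ 5, 1,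
          (Units.mk0 α hα) ^ 5, ((Units.mk0 β hβ)⁻¹) ^ 5, 1] : Fin 5 → ℂˣ)} ⊆
        (fun α : ℂ => -(α ^ 3 + 1) / α) ''
          (⋃ n : ℕ, ((Polynomial.nthRootsFinset (n + 1) (1 : ℂ) : Finset ℂ) : Set ℂ)) := by
      rintro u ⟨α, β, hα, hβ, h1, h2, hfin⟩
      obtain ⟨n, hn, hpow⟩ := isOfFinOrder_iff_pow_eq_one.1 hfin
      have h2' : ((![(Units.mk0 β hβ / Units.mk0 α hα) ^ 5, 1,
          (Units.mk0 α hα) ^ 5, ((Units.mk0 β hβ)⁻¹) ^ 5, 1] : Fin 5 → ℂˣ) ^ n) 2 = 1 := by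
        rw [hpow]; rfl
      have hu : (Units.mk0 α hα) ^ (5 * n) = 1 := by
        have : ((Units.mk0 α hα) ^ 5) ^ n = 1 := by
          simpa [Pi.pow_apply] using h2'
        rw [← pow_mul] at this
        exact this
      have hαn : α ^ (5 * n) = 1 := by
        have := congrArg Units.val hu
        simpa using this
      have hpos : 0 < 5 * n := by omega
      refine ⟨α, Set.mem_iUnion.2 ⟨5 * n - 1, ?_⟩, ?_⟩
      · rw [Finset.mem_coe, Polynomial.mem_nthRootsFinset (by omega)]
        have : 5 * n - 1 + 1 = 5 * n := by omega
        rw [this]; exact hαn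
      · field_simp
        linear_combination -h1
    refine Set.Countable.mono hsub ?_
    exact ((Set.countable_iUnion fun n =>
      (Polynomial.nthRootsFinset (n + 1) (1 : ℂ)).finite_toSet.countable).image _)
  · intro u hu α β hα hβ h1 h2 hfin
    exact hu ⟨α, β, hα, hβ, h1, h2, hfin⟩
end

section
/- Let u ∈ ℂ with 4u³ + 27 ≠ 0 and let a, b, c be the three pairwise distinct, nonzero roots of z³ + uz + 1. The ℂ-linear map L : ℂ⁴ → ℂ⁵ defined by L(a0, a1, a2, a3) = (a0, q(a)/(a(a−b)(a−c)), q(b)/(b(b−a)(b−c)), q(c)/(c(c−a)(c−b)), −a3), where q(z) = a0 + a1·z + a2·z² + a3·z³, is injective and its image is exactly the hyperplane {(c1, c2, c3, c4, c5) ∈ ℂ⁵ : c1 + c2 + c3 + c4 + c5 = 0}. -/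
private lemma residue_sum' (a b c : ℂ) (hab : a ≠ b) (hac : a ≠ c) (hbc : b ≠ c)
    (ha : a ≠ 0) (hb : b ≠ 0) (hc : c ≠ 0)
    (v0 v1 v2 v3 : ℂ) :
    v0 / (-(a * b * c))
      + (v0 + v1 * a + v2 * a ^ 2 + v3 * a ^ 3) / (a * (a - b) * (a - c))
      + (v0 + v1 * b + v2 * b ^ 2 + v3 * b ^ 3) / (b * (b - a) * (b - c))
      + (v0 + v1 * c + v2 * c ^ 2 + v3 * c ^ 3) / (c * (c - a) * (c - b))
      + -v3 = 0 := by
  have hab' : a - b ≠ 0 := sub_ne_zero.mpr hab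
  have hac' : a - c ≠ 0 := sub_ne_zero.mpr hac
  have hbc' : b - c ≠ 0 := sub_ne_zero.mpr hbc
  have hba' : b - a ≠ 0 := sub_ne_zero.mpr hab.symm
  have hca' : c - a ≠ 0 := sub_ne_zero.mpr hac.symm
  have hcb' : c - b ≠ 0 := sub_ne_zero.mpr hbc.symm
  have h1 : -(a * b * c) ≠ 0 := neg_ne_zero.mpr (mul_ne_zero (mul_ne_zero ha hb) hc)
  have h2 : a * (a - b) * (a - c) ≠ 0 := mul_ne_zero (mul_ne_zero ha hab') hac'
  have h3 : b * (b - a) * (b - c) ≠ 0 := mul_ne_zero (mul_ne_zero hb hba') hbc'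
  have h4 : c * (c - a) * (c - b) ≠ 0 := mul_ne_zero (mul_ne_zero hc hca') hcb'
  rw [div_add_div _ _ h1 h2, div_add_div _ _ (mul_ne_zero h1 h2) h3,
    div_add_div _ _ (mul_ne_zero (mul_ne_zero h1 h2) h3) h4,
    add_eq_zero_iff_eq_neg, div_eq_iff (mul_ne_zero (mul_ne_zero (mul_ne_zero h1 h2) h3) h4)]
  ring

/-- Let `a, b, c` be the three pairwise distinct, nonzero roots of `z³ + uz + 1`
(`4u³ + 27 ≠ 0`). The linear map `L : ℂ⁴ → ℂ⁵` of residues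
`L(a0,a1,a2,a3) = (a0, q(a)/(a(a−b)(a−c)), q(b)/(b(b−a)(b−c)), q(c)/(c(c−a)(c−b)), −a3)`,
with `q(z) = a0 + a1 z + a2 z² + a3 z³`, is injective with image exactly the
hyperplane `{c1 + c2 + c3 + c4 + c5 = 0}`. -/
theorem residue_map_injective_image_hyperplane (u a b c : ℂ)
    (hu : 4 * u ^ 3 + 27 ≠ 0)
    (hab : a ≠ b) (hac : a ≠ c) (hbc : b ≠ c)
    (ha : a ≠ 0) (hb : b ≠ 0) (hc : c ≠ 0)
    (hroots : ∀ z : ℂ, z ^ 3 + u * z + 1 = (z - a) * (z - b) * (z - c))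
    (L : (Fin 4 → ℂ) → (Fin 5 → ℂ))
    (hL : ∀ v : Fin 4 → ℂ, L v = ![v 0,
      (v 0 + v 1 * a + v 2 * a ^ 2 + v 3 * a ^ 3) / (a * (a - b) * (a - c)),
      (v 0 + v 1 * b + v 2 * b ^ 2 + v 3 * b ^ 3) / (b * (b - a) * (b - c)),
      (v 0 + v 1 * c + v 2 * c ^ 2 + v 3 * c ^ 3) / (c * (c - a) * (c - b)),
      -(v 3)]) :
    Function.Injective L ∧
    Set.range L = {w : Fin 5 → ℂ | w 0 + w 1 + w 2 + w 3 + w 4 = 0} := by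
  have hab' : a - b ≠ 0 := sub_ne_zero.mpr hab
  have hac' : a - c ≠ 0 := sub_ne_zero.mpr hac
  have hbc' : b - c ≠ 0 := sub_ne_zero.mpr hbc
  have hba' : b - a ≠ 0 := sub_ne_zero.mpr hab.symm
  have hca' : c - a ≠ 0 := sub_ne_zero.mpr hac.symm
  have hcb' : c - b ≠ 0 := sub_ne_zero.mpr hbc.symm
  have h2 : a * (a - b) * (a - c) ≠ 0 := mul_ne_zero (mul_ne_zero ha hab') hac'
  have h3 : b * (b - a) * (b - c) ≠ 0 := mul_ne_zero (mul_ne_zero hb hba') hbc'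
  have h4 : c * (c - a) * (c - b) ≠ 0 := mul_ne_zero (mul_ne_zero hc hca') hcb'
  have habc : a * b * c = -1 := by linear_combination hroots 0
  -- the residue theorem: the five components always sum to zero
  have key : ∀ v0 v1 v2 v3 : ℂ,
      v0 + (v0 + v1 * a + v2 * a ^ 2 + v3 * a ^ 3) / (a * (a - b) * (a - c))
        + (v0 + v1 * b + v2 * b ^ 2 + v3 * b ^ 3) / (b * (b - a) * (b - c))
        + (v0 + v1 * c + v2 * c ^ 2 + v3 * c ^ 3) / (c * (c - a) * (c - b))
        + -v3 = 0 := by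
    intro v0 v1 v2 v3
    have h := residue_sum' a b c hab hac hbc ha hb hc v0 v1 v2 v3
    have h0 : v0 / (-(a * b * c)) = v0 := by rw [habc]; norm_num
    rw [h0] at h
    exact h
  constructor
  · -- injectivity
    intro v w h
    have h' : (![v 0,
      (v 0 + v 1 * a + v 2 * a ^ 2 + v 3 * a ^ 3) / (a * (a - b) * (a - c)),
      (v 0 + v 1 * b + v 2 * b ^ 2 + v 3 * b ^ 3) / (b * (b - a) * (b - c)),
      (v 0 + v 1 * c + v 2 * c ^ 2 + v 3 * c ^ 3) / (c * (c - a) * (c - b)),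
      -(v 3)] : Fin 5 → ℂ) = ![w 0,
      (w 0 + w 1 * a + w 2 * a ^ 2 + w 3 * a ^ 3) / (a * (a - b) * (a - c)),
      (w 0 + w 1 * b + w 2 * b ^ 2 + w 3 * b ^ 3) / (b * (b - a) * (b - c)),
      (w 0 + w 1 * c + w 2 * c ^ 2 + w 3 * c ^ 3) / (c * (c - a) * (c - b)),
      -(w 3)] := (hL v).symm.trans (h.trans (hL w))
    have e0 : v 0 = w 0 := by have := congrFun h' 0; simpa using this
    have e3 : v 3 = w 3 := by have := congrFun h' 4; simpa using this
    have ea : (v 0 + v 1 * a + v 2 * a ^ 2 + v 3 * a ^ 3) / (a * (a - b) * (a - c))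
        = (w 0 + w 1 * a + w 2 * a ^ 2 + w 3 * a ^ 3) / (a * (a - b) * (a - c)) := by
      have := congrFun h' 1; simpa using this
    have eb : (v 0 + v 1 * b + v 2 * b ^ 2 + v 3 * b ^ 3) / (b * (b - a) * (b - c))
        = (w 0 + w 1 * b + w 2 * b ^ 2 + w 3 * b ^ 3) / (b * (b - a) * (b - c)) := by
      have := congrFun h' 2; simpa using this
    have qa : v 0 + v 1 * a + v 2 * a ^ 2 + v 3 * a ^ 3
        = w 0 + w 1 * a + w 2 * a ^ 2 + w 3 * a ^ 3 := by
      rw [div_eq_div_iff h2 h2] at ea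
      exact mul_right_cancel₀ h2 ea
    have qb : v 0 + v 1 * b + v 2 * b ^ 2 + v 3 * b ^ 3
        = w 0 + w 1 * b + w 2 * b ^ 2 + w 3 * b ^ 3 := by
      rw [div_eq_div_iff h3 h3] at eb
      exact mul_right_cancel₀ h3 eb
    have k2 : (v 2 - w 2) * (a * b * (a - b)) = 0 := by
      linear_combination b * qa - a * qb + (a - b) * e0 + (a * b ^ 3 - a ^ 3 * b) * e3
    have e2 : v 2 = w 2 := by
      have hne : a * b * (a - b) ≠ 0 := mul_ne_zero (mul_ne_zero ha hb) hab'
      exact sub_eq_zero.mp ((mul_eq_zero.mp k2).resolve_right hne)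
    have k1 : (v 1 - w 1) * a = 0 := by
      linear_combination qa - e0 - a ^ 2 * e2 - a ^ 3 * e3
    have e1 : v 1 = w 1 :=
      sub_eq_zero.mp ((mul_eq_zero.mp k1).resolve_right ha)
    funext i
    fin_cases i <;> assumption
  · ext w
    constructor
    · rintro ⟨v, rfl⟩
      rw [hL]
      have := key (v 0) (v 1) (v 2) (v 3)
      simpa using this
    · intro hw
      simp only [Set.mem_setOf_eq] at hw
      set A : ℂ := w 1 * (a * (a - b) * (a - c)) - w 0 + w 4 * a ^ 3 with hA
      set B : ℂ := w 2 * (b * (b - a) * (b - c)) - w 0 + w 4 * b ^ 3 with hB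
      have hd : a * b * (a - b) ≠ 0 := mul_ne_zero (mul_ne_zero ha hb) hab'
      set x2 : ℂ := (b * A - a * B) / (a * b * (a - b)) with hx2
      set x1 : ℂ := (a ^ 2 * B - b ^ 2 * A) / (a * b * (a - b)) with hx1
      have eqA : x1 * a + x2 * a ^ 2 = A := by
        rw [hx1, hx2, div_mul_eq_mul_div, div_mul_eq_mul_div, div_add_div _ _ hd hd,
          div_eq_iff (mul_ne_zero hd hd)]
        ring
      have eqB : x1 * b + x2 * b ^ 2 = B := by
        rw [hx1, hx2, div_mul_eq_mul_div, div_mul_eq_mul_div, div_add_div _ _ hd hd,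
          div_eq_iff (mul_ne_zero hd hd)]
        ring
      refine ⟨![w 0, x1, x2, -(w 4)], ?_⟩
      rw [hL]
      have c1 : (w 0 + x1 * a + x2 * a ^ 2 + -(w 4) * a ^ 3) / (a * (a - b) * (a - c))
          = w 1 := by
        rw [div_eq_iff h2]
        linear_combination eqA
      have c2 : (w 0 + x1 * b + x2 * b ^ 2 + -(w 4) * b ^ 3) / (b * (b - a) * (b - c))
          = w 2 := by
        rw [div_eq_iff h3]
        linear_combination eqB
      have s := key (w 0) x1 x2 (-(w 4))
      rw [c1, c2] at s
      have c3 : (w 0 + x1 * c + x2 * c ^ 2 + -(w 4) * c ^ 3) / (c * (c - a) * (c - b))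
          = w 3 := by
        linear_combination s - hw
      funext i
      fin_cases i
      · simp
      · simpa using c1
      · simpa using c2
      · simpa using c3
      · simp
end

section
/- In ℂ[x0,x1,x2,x3], let I be the ideal generated by x0x1⁴ + 4x0⁴x2, 4x0x1³ + x2⁴, 4x1x2³ + x0⁴, and 5x3⁵ + 4x1⁴x3. Then for all homogeneous polynomials G0, G3 of degree 2, the polynomial (52x2³ + x0·G0 + x3·G3)·x1⁴x3 does not belong to I. -/
open MvPolynomial

namespace LiftedResidueAux

abbrev Rng := MvPolynomial (Fin 4) ℂ

noncomputable def ex (a b c d : ℕ) : Fin 4 →₀ ℕ := Finsupp.equivFunOnFinite.symm ![a, b, c, d]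

@[simp] lemma ex_apply (a b c d : ℕ) (i : Fin 4) : ex a b c d i = ![a,b,c,d] i := rfl

lemma exify (a b c d : ℕ) :
    (Finsupp.single (0:Fin 4) a + Finsupp.single 1 b + Finsupp.single 2 c
      + Finsupp.single 3 d) = ex a b c d := by
  ext i; fin_cases i <;> simp [Finsupp.single_apply]

lemma mon_ex (a b c d : ℕ) (r : ℂ) :
    (monomial (ex a b c d) r : Rng)
      = C r * X 0 ^ a * X 1 ^ b * X 2 ^ c * X 3 ^ d := by
  rw [← exify]
  simp only [X_pow_eq_monomial, C_mul_monomial, monomial_mul, mul_one, one_mul]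

lemma ex_le_iff {a b c d a' b' c' d' : ℕ} :
    ex a b c d ≤ ex a' b' c' d' ↔ (a ≤ a' ∧ b ≤ b' ∧ c ≤ c' ∧ d ≤ d') := by
  rw [Finsupp.le_def]
  constructor
  · intro h; exact ⟨by simpa using h 0, by simpa using h 1, by simpa using h 2,
      by simpa using h 3⟩
  · rintro ⟨h0, h1, h2, h3⟩ i; fin_cases i <;> simpa

lemma ex_eq_iff {a b c d a' b' c' d' : ℕ} :
    ex a b c d = ex a' b' c' d' ↔ (a = a' ∧ b = b' ∧ c = c' ∧ d = d') := by
  constructor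
  · intro h
    rw [Finsupp.ext_iff] at h
    exact ⟨by simpa using h 0, by simpa using h 1, by simpa using h 2, by simpa using h 3⟩
  · rintro ⟨rfl, rfl, rfl, rfl⟩; rfl

lemma ex_sub (a b c d a' b' c' d' : ℕ) :
    ex a b c d - ex a' b' c' d' = ex (a - a') (b - b') (c - c') (d - d') := by
  ext i
  rw [Finsupp.tsub_apply]
  fin_cases i <;> simp

/-- The certificate linear functional. -/
noncomputable def L (p : Rng) : ℂ :=
  -4 * coeff (ex 0 0 3 5) p + 5 * coeff (ex 0 4 3 1) p
    + 80 * coeff (ex 3 0 4 1) p - 20 * coeff (ex 4 3 0 1) p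

lemma L_add (p q : Rng) : L (p + q) = L p + L q := by
  simp only [L, coeff_add]; ring

lemma L_mul_mon (q : Rng) (e : Fin 4 →₀ ℕ) (r : ℂ) :
    L (q * monomial e r)
      = -4 * (if e ≤ ex 0 0 3 5 then coeff (ex 0 0 3 5 - e) q * r else 0)
        + 5 * (if e ≤ ex 0 4 3 1 then coeff (ex 0 4 3 1 - e) q * r else 0)
        + 80 * (if e ≤ ex 3 0 4 1 then coeff (ex 3 0 4 1 - e) q * r else 0)
        - 20 * (if e ≤ ex 4 3 0 1 then coeff (ex 4 3 0 1 - e) q * r else 0) := by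
  simp only [L, coeff_mul_monomial']

lemma L_g1 (q : Rng) :
    L (q * (monomial (ex 1 4 0 0) 1 + monomial (ex 4 0 1 0) 4)) = 0 := by
  rw [mul_add, L_add, L_mul_mon, L_mul_mon]
  simp only [ex_le_iff, ex_sub]
  norm_num

lemma L_g2 (q : Rng) :
    L (q * (monomial (ex 1 3 0 0) 4 + monomial (ex 0 0 4 0) 1)) = 0 := by
  rw [mul_add, L_add, L_mul_mon, L_mul_mon]
  simp only [ex_le_iff, ex_sub]
  norm_num
  ring

lemma L_g3 (q : Rng) :
    L (q * (monomial (ex 0 1 3 0) 4 + monomial (ex 4 0 0 0) 1)) = 0 := by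
  rw [mul_add, L_add, L_mul_mon, L_mul_mon]
  simp only [ex_le_iff, ex_sub]
  norm_num
  ring

lemma L_g4 (q : Rng) :
    L (q * (monomial (ex 0 0 0 5) 5 + monomial (ex 0 4 0 1) 4)) = 0 := by
  rw [mul_add, L_add, L_mul_mon, L_mul_mon]
  simp only [ex_le_iff, ex_sub]
  norm_num
  ring

lemma L_var0 (G : Rng) : L (G * monomial (ex 1 4 0 1) 1) = 0 := by
  rw [L_mul_mon]
  simp only [ex_le_iff]
  norm_num

lemma L_var3 (G : Rng) : L (G * monomial (ex 0 4 0 2) 1) = 0 := by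
  rw [L_mul_mon]
  simp only [ex_le_iff]
  norm_num

lemma L_target : L (monomial (ex 0 4 3 1) 52) = 260 := by
  simp only [L, coeff_monomial, ex_eq_iff]
  norm_num

end LiftedResidueAux

open LiftedResidueAux

/-- In `ℂ[x0,x1,x2,x3]`, with `I = (x0x1⁴ + 4x0⁴x2, 4x0x1³ + x2⁴, 4x1x2³ + x0⁴,
5x3⁵ + 4x1⁴x3)`, for all homogeneous quadrics `G0, G3`, the polynomial
`(52x2³ + x0·G0 + x3·G3)·x1⁴x3` does not belong to `I`. -/
theorem lifted_residue_solution_not_in_ideal (I : Ideal (MvPolynomial (Fin 4) ℂ))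
    (hI : I = Ideal.span {X 0 * X 1 ^ 4 + 4 * X 0 ^ 4 * X 2,
      4 * X 0 * X 1 ^ 3 + X 2 ^ 4,
      4 * X 1 * X 2 ^ 3 + X 0 ^ 4,
      5 * X 3 ^ 5 + 4 * X 1 ^ 4 * X 3}) :
    ∀ G0 G3 : MvPolynomial (Fin 4) ℂ, G0.IsHomogeneous 2 → G3.IsHomogeneous 2 →
      (52 * X 2 ^ 3 + X 0 * G0 + X 3 * G3) * X 1 ^ 4 * X 3 ∉ I := by
  intro G0 G3 _ _ hmem
  have hg1 : (X 0 * X 1 ^ 4 + 4 * X 0 ^ 4 * X 2 : Rng)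
      = monomial (ex 1 4 0 0) 1 + monomial (ex 4 0 1 0) 4 := by
    rw [mon_ex, mon_ex]; push_cast [map_one, map_ofNat]; ring
  have hg2 : (4 * X 0 * X 1 ^ 3 + X 2 ^ 4 : Rng)
      = monomial (ex 1 3 0 0) 4 + monomial (ex 0 0 4 0) 1 := by
    rw [mon_ex, mon_ex]; push_cast [map_one, map_ofNat]; ring
  have hg3 : (4 * X 1 * X 2 ^ 3 + X 0 ^ 4 : Rng)
      = monomial (ex 0 1 3 0) 4 + monomial (ex 4 0 0 0) 1 := by
    rw [mon_ex, mon_ex]; push_cast [map_one, map_ofNat]; ring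
  have hg4 : (5 * X 3 ^ 5 + 4 * X 1 ^ 4 * X 3 : Rng)
      = monomial (ex 0 0 0 5) 5 + monomial (ex 0 4 0 1) 4 := by
    rw [mon_ex, mon_ex]; push_cast [map_one, map_ofNat]; ring
  have htgt : ((52 * X 2 ^ 3 + X 0 * G0 + X 3 * G3) * X 1 ^ 4 * X 3 : Rng)
      = monomial (ex 0 4 3 1) 52 + G0 * monomial (ex 1 4 0 1) 1
        + G3 * monomial (ex 0 4 0 2) 1 := by
    rw [mon_ex, mon_ex, mon_ex]; push_cast [map_one, map_ofNat]; ring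
  rw [hI, hg1, hg2, hg3, hg4] at hmem
  obtain ⟨q1, z1, hz1, he1⟩ := Ideal.mem_span_insert.mp hmem
  obtain ⟨q2, z2, hz2, he2⟩ := Ideal.mem_span_insert.mp hz1
  obtain ⟨q3, z3, hz3, he3⟩ := Ideal.mem_span_insert.mp hz2
  obtain ⟨q4, he4⟩ := Ideal.mem_span_singleton'.mp hz3
  have hL : L ((52 * X 2 ^ 3 + X 0 * G0 + X 3 * G3) * X 1 ^ 4 * X 3 : Rng) = 0 := by
    rw [he1, he2, he3, ← he4]
    rw [L_add, L_add, L_add, L_g1 q1, L_g2 q2, L_g3 q3, L_g4 q4]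
    ring
  rw [htgt, L_add, L_add, L_target, L_var0, L_var3] at hL
  norm_num at hL
end

section
/- Let F = y⁴ + xzy² + x⁴ − z⁴ ∈ ℂ[x,y,z], with partial derivatives F_x = y²z + 4x³, F_y = 4y³ + 2xyz, F_z = xy² − 4z³. Let H₄ be the ℂ-vector space of homogeneous polynomials of degree 4 in x, y, z, and let W ⊆ H₄ be the subspace {A·F_x + B·F_y + C·F_z : A, B, C homogeneous linear forms in x, y, z}. Then the images of the six monomials x²yz, xy z², x⁴, x³z, x²z², xz³ form a basis of the quotient vector space H₄/W; in particular dim_ℂ(H₄/W) = 6. -/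
open MvPolynomial

private lemma finsupp_fin3_eq (d : Fin 3 →₀ ℕ) :
    d = Finsupp.single 0 (d 0) + Finsupp.single 1 (d 1) + Finsupp.single 2 (d 2) := by
  ext i
  fin_cases i <;> simp [Finsupp.single_apply]

private lemma monomial_fin3 (d : Fin 3 →₀ ℕ) (r : ℂ) :
    (monomial d r : MvPolynomial (Fin 3) ℂ) =
      C r * X 0 ^ (d 0) * X 1 ^ (d 1) * X 2 ^ (d 2) := by
  rw [X_pow_eq_monomial, X_pow_eq_monomial, X_pow_eq_monomial, C_apply,
    monomial_mul, monomial_mul, monomial_mul]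
  rw [mul_one, mul_one, mul_one, zero_add, ← finsupp_fin3_eq]

private lemma deg_fin3 {p : MvPolynomial (Fin 3) ℂ} {n : ℕ} (hp : p.IsHomogeneous n)
    {v : Fin 3 →₀ ℕ} (hv : v ∈ p.support) : v 0 + v 1 + v 2 = n := by
  have h1 : v.degree = n := by
    by_contra h
    exact (MvPolynomial.mem_support_iff.mp hv) (hp.coeff_eq_zero h)
  rw [← h1, Finsupp.degree_apply]
  rw [show (∑ i ∈ v.support, v i) = ∑ i : Fin 3, v i from
    Finset.sum_subset (Finset.subset_univ _) (fun i _ hi => Finsupp.notMem_support_iff.mp hi)]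
  simp [Fin.sum_univ_three]

private lemma cons_val_five {α : Type*} (a b c d e f : α) : ![a, b, c, d, e, f] (5 : Fin 6) = f :=
  rfl

set_option maxHeartbeats 1000000 in
private lemma lin_decomp {p : MvPolynomial (Fin 3) ℂ} (hp : p.IsHomogeneous 1) :
    ∃ a b c : ℂ, p = C a * X 0 + C b * X 1 + C c * X 2 := by
  have hmem : p ∈ Submodule.span ℂ (Set.range ![(X 0 : MvPolynomial (Fin 3) ℂ), X 1, X 2]) := by
    rw [p.as_sum]
    apply Submodule.sum_mem
    intro v hv
    have hd := deg_fin3 hp hv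
    rw [monomial_fin3, mul_assoc, mul_assoc, C_mul']
    apply Submodule.smul_mem
    rcases (by omega : (v 0 = 1 ∧ v 1 = 0 ∧ v 2 = 0) ∨ (v 0 = 0 ∧ v 1 = 1 ∧ v 2 = 0) ∨
        (v 0 = 0 ∧ v 1 = 0 ∧ v 2 = 1)) with ⟨e0, e1, e2⟩ | ⟨e0, e1, e2⟩ | ⟨e0, e1, e2⟩ <;>
      rw [e0, e1, e2]
    · have h0 : (X 0 : MvPolynomial (Fin 3) ℂ) ∈
          Set.range ![(X 0 : MvPolynomial (Fin 3) ℂ), X 1, X 2] := ⟨0, rfl⟩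
      simpa using Submodule.subset_span h0
    · have h0 : (X 1 : MvPolynomial (Fin 3) ℂ) ∈
          Set.range ![(X 0 : MvPolynomial (Fin 3) ℂ), X 1, X 2] := ⟨1, rfl⟩
      simpa using Submodule.subset_span h0
    · have h0 : (X 2 : MvPolynomial (Fin 3) ℂ) ∈
          Set.range ![(X 0 : MvPolynomial (Fin 3) ℂ), X 1, X 2] := ⟨2, rfl⟩
      simpa using Submodule.subset_span h0
  obtain ⟨c, hc⟩ := (Submodule.mem_span_range_iff_exists_fun ℂ).mp hmem
  refine ⟨c 0, c 1, c 2, ?_⟩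
  rw [← hc]
  simp [Fin.sum_univ_three, C_mul']

set_option maxHeartbeats 2000000 in
/-- With `x = X 0`, `y = X 1`, `z = X 2` and `F = y⁴ + xzy² + x⁴ − z⁴`, partial
derivatives `Fx = y²z + 4x³`, `Fy = 4y³ + 2xyz`, `Fz = xy² − 4z³`: let `H₄` be the
space of homogeneous quartics and `W = {A·Fx + B·Fy + C·Fz : A, B, C linear forms}`.
Then the images of `x²yz, xyz², x⁴, x³z, x²z², xz³` form a basis of `H₄/W`;
in particular `dim(H₄/W) = 6`. -/
theorem jacobian_ring_degree_four_basis
    (Fx Fy Fz : MvPolynomial (Fin 3) ℂ)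
    (hFx : Fx = X 1 ^ 2 * X 2 + 4 * X 0 ^ 3)
    (hFy : Fy = 4 * X 1 ^ 3 + 2 * X 0 * X 1 * X 2)
    (hFz : Fz = X 0 * X 1 ^ 2 - 4 * X 2 ^ 3)
    (H4 : Submodule ℂ (MvPolynomial (Fin 3) ℂ))
    (hH4 : H4 = MvPolynomial.homogeneousSubmodule (Fin 3) ℂ 4)
    (W : Submodule ℂ (MvPolynomial (Fin 3) ℂ))
    (hW : (W : Set (MvPolynomial (Fin 3) ℂ)) =
      {p | ∃ A B D : MvPolynomial (Fin 3) ℂ, A.IsHomogeneous 1 ∧ B.IsHomogeneous 1 ∧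
        D.IsHomogeneous 1 ∧ p = A * Fx + B * Fy + D * Fz})
    (m : Fin 6 → MvPolynomial (Fin 3) ℂ)
    (hm : m = ![X 0 ^ 2 * X 1 * X 2, X 0 * X 1 * X 2 ^ 2, X 0 ^ 4, X 0 ^ 3 * X 2,
      X 0 ^ 2 * X 2 ^ 2, X 0 * X 2 ^ 3]) :
    (∀ c : Fin 6 → ℂ, (∑ i, c i • m i) ∈ W → c = 0) ∧
    (H4 : Set (MvPolynomial (Fin 3) ℂ)) ⊆
      ↑(W ⊔ Submodule.span ℂ (Set.range m)) ∧
    Module.finrank ℂ (↥H4 ⧸ (W.comap H4.subtype)) = 6 := by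
  subst hFx hFy hFz hH4
  -- Part 1: linear independence modulo W
  have key1 : ∀ c : Fin 6 → ℂ, (∑ i, c i • m i) ∈ W → c = 0 := by
    intro c hcW
    rw [← SetLike.mem_coe, hW] at hcW
    obtain ⟨A, B, D, hA, hB, hD, hE⟩ := hcW
    obtain ⟨a0, a1, a2, rfl⟩ := lin_decomp hA
    obtain ⟨b0, b1, b2, rfl⟩ := lin_decomp hB
    obtain ⟨d0, d1, d2, rfl⟩ := lin_decomp hD
    have h1 := congrArg (eval ![(-2:ℂ), 0, 0]) hE
    have h2 := congrArg (eval ![(0:ℂ), 1, 2]) hE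
    have h3 := congrArg (eval ![(1:ℂ), -2, 1]) hE
    have h4 := congrArg (eval ![(0:ℂ), 2, 2]) hE
    have h5 := congrArg (eval ![(2:ℂ), -2, 1]) hE
    have h6 := congrArg (eval ![(1:ℂ), -2, -1]) hE
    have h7 := congrArg (eval ![(-2:ℂ), 0, -1]) hE
    have h8 := congrArg (eval ![(-1:ℂ), -1, -1]) hE
    have h9 := congrArg (eval ![(-1:ℂ), -2, 1]) hE
    have h10 := congrArg (eval ![(-2:ℂ), -2, 0]) hE
    have h11 := congrArg (eval ![(0:ℂ), -2, -1]) hE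
    have h12 := congrArg (eval ![(-2:ℂ), -1, 2]) hE
    have h13 := congrArg (eval ![(-1:ℂ), -1, 2]) hE
    have h14 := congrArg (eval ![(0:ℂ), 2, -2]) hE
    have h15 := congrArg (eval ![(2:ℂ), 0, -1]) hE
    norm_num [hm, Fin.sum_univ_six, smul_eval, cons_val_five, Matrix.cons_val_two, Matrix.cons_val_three, Matrix.cons_val_four, Matrix.tail_cons, Matrix.head_cons] at h1 h2 h3 h4 h5 h6 h7 h8 h9 h10 h11 h12 h13 h14 h15
    funext i
    fin_cases i <;> simp only [Pi.zero_apply]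
    · show c 0 = 0
      linear_combination ((-791 : ℂ)/15648) * h1 + ((-1267 : ℂ)/11736) * h2 + ((1517 : ℂ)/11736) * h3 + ((5611 : ℂ)/125184) * h4 + ((-2495 : ℂ)/46944) * h5 + ((501 : ℂ)/6520) * h6 + ((127 : ℂ)/10432) * h7 + ((2783 : ℂ)/11736) * h8 + ((79 : ℂ)/5868) * h9 + ((-79 : ℂ)/41728) * h10 + ((-7867 : ℂ)/46944) * h11 + ((-1069 : ℂ)/9780) * h12 + ((4753 : ℂ)/23472) * h13 + ((-20903 : ℂ)/375552) * h14 + ((1685 : ℂ)/10432) * h15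
    · show c 1 = 0
      linear_combination ((44647 : ℂ)/125184) * h1 + ((2953 : ℂ)/46944) * h2 + ((-181 : ℂ)/23472) * h3 + ((-35851 : ℂ)/500736) * h4 + ((-127 : ℂ)/187776) * h5 + ((263 : ℂ)/13040) * h6 + ((-6631 : ℂ)/41728) * h7 + ((26443 : ℂ)/46944) * h8 + ((1697 : ℂ)/23472) * h9 + ((-11803 : ℂ)/166912) * h10 + ((4771 : ℂ)/187776) * h11 + ((263 : ℂ)/3260) * h12 + ((-7771 : ℂ)/93888) * h13 + ((-9289 : ℂ)/1502208) * h14 + ((-10113 : ℂ)/41728) * h15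
    · show c 2 = 0
      linear_combination ((889 : ℂ)/2608) * h1 + ((127 : ℂ)/489) * h2 + ((-172 : ℂ)/489) * h3 + ((-935 : ℂ)/5216) * h4 + ((3 : ℂ)/652) * h5 + ((313 : ℂ)/815) * h6 + ((39 : ℂ)/1304) * h7 + ((-113 : ℂ)/489) * h8 + ((115 : ℂ)/489) * h9 + ((-417 : ℂ)/5216) * h10 + ((11 : ℂ)/1956) * h11 + ((496 : ℂ)/2445) * h12 + ((-145 : ℂ)/326) * h13 + ((625 : ℂ)/5216) * h14 + ((-535 : ℂ)/1304) * h15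
    · show c 3 = 0
      linear_combination ((-73 : ℂ)/2608) * h1 + ((125 : ℂ)/326) * h2 + ((53 : ℂ)/978) * h3 + ((-3477 : ℂ)/10432) * h4 + ((-53 : ℂ)/3912) * h5 + ((-7 : ℂ)/815) * h6 + ((205 : ℂ)/2608) * h7 + ((-59 : ℂ)/978) * h8 + ((11 : ℂ)/978) * h9 + ((65 : ℂ)/10432) * h10 + ((1529 : ℂ)/3912) * h11 + ((-28 : ℂ)/815) * h12 + ((57 : ℂ)/652) * h13 + ((-4087 : ℂ)/31296) * h14 + ((-37 : ℂ)/2608) * h15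
    · show c 4 = 0
      linear_combination ((-245 : ℂ)/978) * h1 + ((-71 : ℂ)/2934) * h2 + ((23 : ℂ)/2934) * h3 + ((361 : ℂ)/31296) * h4 + ((-23 : ℂ)/11736) * h5 + ((-1 : ℂ)/1630) * h6 + ((329 : ℂ)/2608) * h7 + ((-1 : ℂ)/2934) * h8 + ((7 : ℂ)/1467) * h9 + ((-7 : ℂ)/10432) * h10 + ((-173 : ℂ)/11736) * h11 + ((-2 : ℂ)/815) * h12 + ((25 : ℂ)/5868) * h13 + ((-445 : ℂ)/93888) * h14 + ((335 : ℂ)/2608) * h15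
    · show c 5 = 0
      linear_combination ((509 : ℂ)/3912) * h1 + ((355 : ℂ)/1467) * h2 + ((-604 : ℂ)/1467) * h3 + ((-2783 : ℂ)/15648) * h4 + ((1093 : ℂ)/5868) * h5 + ((168 : ℂ)/815) * h6 + ((-341 : ℂ)/1304) * h7 + ((983 : ℂ)/1467) * h8 + ((-70 : ℂ)/1467) * h9 + ((361 : ℂ)/5216) * h10 + ((-113 : ℂ)/5868) * h11 + ((386 : ℂ)/2445) * h12 + ((-1103 : ℂ)/2934) * h13 + ((7115 : ℂ)/46944) * h14 + ((-371 : ℂ)/1304) * h15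
  -- helpers
  have hmH4 : ∀ i, m i ∈ MvPolynomial.homogeneousSubmodule (Fin 3) ℂ 4 := by
    intro i
    rw [mem_homogeneousSubmodule, hm]
    fin_cases i <;>
      simp only [Matrix.cons_val_zero, Matrix.cons_val_one, Matrix.head_cons,
        Matrix.cons_val_two, Matrix.tail_cons, Matrix.cons_val_three, Matrix.cons_val_four,
        Matrix.cons_val_succ]
    · simpa using ((isHomogeneous_X_pow 0 2).mul (isHomogeneous_X ℂ 1)).mul (isHomogeneous_X ℂ 2)
    · simpa using ((isHomogeneous_X ℂ 0).mul (isHomogeneous_X ℂ 1)).mul (isHomogeneous_X_pow 2 2)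
    · simpa using isHomogeneous_X_pow (R := ℂ) 0 4
    · simpa using (isHomogeneous_X_pow (R := ℂ) 0 3).mul (isHomogeneous_X ℂ 2)
    · simpa using (isHomogeneous_X_pow (R := ℂ) 0 2).mul (isHomogeneous_X_pow 2 2)
    · simpa using (isHomogeneous_X ℂ 0).mul (isHomogeneous_X_pow 2 3)
  have hWmem : ∀ A B D : MvPolynomial (Fin 3) ℂ, A.IsHomogeneous 1 → B.IsHomogeneous 1 →
      D.IsHomogeneous 1 → A * (X 1 ^ 2 * X 2 + 4 * X 0 ^ 3) + B * (4 * X 1 ^ 3 + 2 * X 0 * X 1 * X 2)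
        + D * (X 0 * X 1 ^ 2 - 4 * X 2 ^ 3) ∈ W := by
    intro A B D hA hB hD
    rw [← SetLike.mem_coe, hW]
    exact ⟨A, B, D, hA, hB, hD, rfl⟩
  have hspanmem : ∀ k : Fin 6 → ℂ, (∑ i, k i • m i) ∈ Submodule.span ℂ (Set.range m) :=
    fun k => (Submodule.mem_span_range_iff_exists_fun ℂ).mpr ⟨k, rfl⟩
  have mem_sup_of : ∀ w s μ : MvPolynomial (Fin 3) ℂ, w ∈ W →
      s ∈ Submodule.span ℂ (Set.range m) → w + s = μ →
      μ ∈ W ⊔ Submodule.span ℂ (Set.range m) :=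
    fun w s μ hw hs h => Submodule.mem_sup.mpr ⟨w, hw, s, hs, h⟩
  have hzero : (0 : MvPolynomial (Fin 3) ℂ).IsHomogeneous 1 := isHomogeneous_zero _ _ _
  have smul_cancel : ∀ (t : ℂ) (μ : MvPolynomial (Fin 3) ℂ), t ≠ 0 →
      t • μ ∈ W ⊔ Submodule.span ℂ (Set.range m) → μ ∈ W ⊔ Submodule.span ℂ (Set.range m) := by
    intro t μ ht h
    have h2 := Submodule.smul_mem (W ⊔ Submodule.span ℂ (Set.range m)) t⁻¹ h
    rwa [smul_smul, inv_mul_cancel₀ ht, one_smul] at h2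
  -- Part 2: spanning
  have key2 : (MvPolynomial.homogeneousSubmodule (Fin 3) ℂ 4 : Set (MvPolynomial (Fin 3) ℂ)) ⊆
      ↑(W ⊔ Submodule.span ℂ (Set.range m)) := by
    intro p hp
    have hp4 : p.IsHomogeneous 4 := hp
    rw [SetLike.mem_coe]
    rw [p.as_sum]
    apply Submodule.sum_mem
    intro v hv
    have hd := deg_fin3 hp4 hv
    rw [monomial_fin3, mul_assoc, mul_assoc, C_mul']
    apply Submodule.smul_mem
    have h0 : v 0 = 0 ∨ v 0 = 1 ∨ v 0 = 2 ∨ v 0 = 3 ∨ v 0 = 4 := by omega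
    have h1 : v 1 = 0 ∨ v 1 = 1 ∨ v 1 = 2 ∨ v 1 = 3 ∨ v 1 = 4 := by omega
    rcases h0 with e0 | e0 | e0 | e0 | e0 <;> rcases h1 with e1 | e1 | e1 | e1 | e1 <;>
      rw [e0, e1] at hd ⊢
    · have e2 : v 2 = 4 := by omega
      rw [e2]
      apply smul_cancel (4 : ℂ) _ (by norm_num)
      refine mem_sup_of _ _ _ (hWmem (X 0) (0) (C (-1 : ℂ) * X 2)
        (isHomogeneous_X _ _) (hzero) (isHomogeneous_C_mul_X _ _)) (hspanmem ![0, 0, -4, 0, 0, 0]) ?_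
      norm_num [hm, Fin.sum_univ_six, cons_val_five, smul_eq_C_mul, map_ofNat, Matrix.cons_val_two, Matrix.cons_val_three, Matrix.cons_val_four, Matrix.tail_cons, Matrix.head_cons]
      try ring
    · have e2 : v 2 = 3 := by omega
      rw [e2]
      apply smul_cancel (16 : ℂ) _ (by norm_num)
      refine mem_sup_of _ _ _ (hWmem (0) (X 0) (C (-4 : ℂ) * X 1)
        (hzero) (isHomogeneous_X _ _) (isHomogeneous_C_mul_X _ _)) (hspanmem ![-2, 0, 0, 0, 0, 0]) ?_
      norm_num [hm, Fin.sum_univ_six, cons_val_five, smul_eq_C_mul, map_ofNat, Matrix.cons_val_two, Matrix.cons_val_three, Matrix.cons_val_four, Matrix.tail_cons, Matrix.head_cons]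
      try ring
    · have e2 : v 2 = 2 := by omega
      rw [e2]
      refine mem_sup_of _ _ _ (hWmem (X 2) (0) (0)
        (isHomogeneous_X _ _) (hzero) (hzero)) (hspanmem ![0, 0, 0, -4, 0, 0]) ?_
      norm_num [hm, Fin.sum_univ_six, cons_val_five, smul_eq_C_mul, map_ofNat, Matrix.cons_val_two, Matrix.cons_val_three, Matrix.cons_val_four, Matrix.tail_cons, Matrix.head_cons]
      try ring
    · have e2 : v 2 = 1 := by omega
      rw [e2]
      apply smul_cancel (4 : ℂ) _ (by norm_num)
      refine mem_sup_of _ _ _ (hWmem (0) (X 2) (0)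
        (hzero) (isHomogeneous_X _ _) (hzero)) (hspanmem ![0, -2, 0, 0, 0, 0]) ?_
      norm_num [hm, Fin.sum_univ_six, cons_val_five, smul_eq_C_mul, map_ofNat, Matrix.cons_val_two, Matrix.cons_val_three, Matrix.cons_val_four, Matrix.tail_cons, Matrix.head_cons]
      try ring
    · have e2 : v 2 = 0 := by omega
      rw [e2]
      apply smul_cancel (4 : ℂ) _ (by norm_num)
      refine mem_sup_of _ _ _ (hWmem (C (-2 : ℂ) * X 0) (X 1) (0)
        (isHomogeneous_C_mul_X _ _) (isHomogeneous_X _ _) (hzero)) (hspanmem ![0, 0, 8, 0, 0, 0]) ?_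
      norm_num [hm, Fin.sum_univ_six, cons_val_five, smul_eq_C_mul, map_ofNat, Matrix.cons_val_two, Matrix.cons_val_three, Matrix.cons_val_four, Matrix.tail_cons, Matrix.head_cons]
      try ring
    · have e2 : v 2 = 3 := by omega
      rw [e2]
      refine mem_sup_of _ _ _ (hWmem (0) (0) (0)
        (hzero) (hzero) (hzero)) (hspanmem ![0, 0, 0, 0, 0, 1]) ?_
      norm_num [hm, Fin.sum_univ_six, cons_val_five, smul_eq_C_mul, map_ofNat, Matrix.cons_val_two, Matrix.cons_val_three, Matrix.cons_val_four, Matrix.tail_cons, Matrix.head_cons]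
      try ring
    · have e2 : v 2 = 2 := by omega
      rw [e2]
      refine mem_sup_of _ _ _ (hWmem (0) (0) (0)
        (hzero) (hzero) (hzero)) (hspanmem ![0, 1, 0, 0, 0, 0]) ?_
      norm_num [hm, Fin.sum_univ_six, cons_val_five, smul_eq_C_mul, map_ofNat, Matrix.cons_val_two, Matrix.cons_val_three, Matrix.cons_val_four, Matrix.tail_cons, Matrix.head_cons]
      try ring
    · have e2 : v 2 = 1 := by omega
      rw [e2]
      refine mem_sup_of _ _ _ (hWmem (X 0) (0) (0)
        (isHomogeneous_X _ _) (hzero) (hzero)) (hspanmem ![0, 0, -4, 0, 0, 0]) ?_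
      norm_num [hm, Fin.sum_univ_six, cons_val_five, smul_eq_C_mul, map_ofNat, Matrix.cons_val_two, Matrix.cons_val_three, Matrix.cons_val_four, Matrix.tail_cons, Matrix.head_cons]
      try ring
    · have e2 : v 2 = 0 := by omega
      rw [e2]
      apply smul_cancel (4 : ℂ) _ (by norm_num)
      refine mem_sup_of _ _ _ (hWmem (0) (X 0) (0)
        (hzero) (isHomogeneous_X _ _) (hzero)) (hspanmem ![-2, 0, 0, 0, 0, 0]) ?_
      norm_num [hm, Fin.sum_univ_six, cons_val_five, smul_eq_C_mul, map_ofNat, Matrix.cons_val_two, Matrix.cons_val_three, Matrix.cons_val_four, Matrix.tail_cons, Matrix.head_cons]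
      try ring
    · exact absurd hd (by omega)
    · have e2 : v 2 = 2 := by omega
      rw [e2]
      refine mem_sup_of _ _ _ (hWmem (0) (0) (0)
        (hzero) (hzero) (hzero)) (hspanmem ![0, 0, 0, 0, 1, 0]) ?_
      norm_num [hm, Fin.sum_univ_six, cons_val_five, smul_eq_C_mul, map_ofNat, Matrix.cons_val_two, Matrix.cons_val_three, Matrix.cons_val_four, Matrix.tail_cons, Matrix.head_cons]
      try ring
    · have e2 : v 2 = 1 := by omega
      rw [e2]
      refine mem_sup_of _ _ _ (hWmem (0) (0) (0)
        (hzero) (hzero) (hzero)) (hspanmem ![1, 0, 0, 0, 0, 0]) ?_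
      norm_num [hm, Fin.sum_univ_six, cons_val_five, smul_eq_C_mul, map_ofNat, Matrix.cons_val_two, Matrix.cons_val_three, Matrix.cons_val_four, Matrix.tail_cons, Matrix.head_cons]
      try ring
    · have e2 : v 2 = 0 := by omega
      rw [e2]
      refine mem_sup_of _ _ _ (hWmem (0) (0) (X 0)
        (hzero) (hzero) (isHomogeneous_X _ _)) (hspanmem ![0, 0, 0, 0, 0, 4]) ?_
      norm_num [hm, Fin.sum_univ_six, cons_val_five, smul_eq_C_mul, map_ofNat, Matrix.cons_val_two, Matrix.cons_val_three, Matrix.cons_val_four, Matrix.tail_cons, Matrix.head_cons]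
      try ring
    · exact absurd hd (by omega)
    · exact absurd hd (by omega)
    · have e2 : v 2 = 1 := by omega
      rw [e2]
      refine mem_sup_of _ _ _ (hWmem (0) (0) (0)
        (hzero) (hzero) (hzero)) (hspanmem ![0, 0, 0, 1, 0, 0]) ?_
      norm_num [hm, Fin.sum_univ_six, cons_val_five, smul_eq_C_mul, map_ofNat, Matrix.cons_val_two, Matrix.cons_val_three, Matrix.cons_val_four, Matrix.tail_cons, Matrix.head_cons]
      try ring
    · have e2 : v 2 = 0 := by omega
      rw [e2]
      apply smul_cancel (16 : ℂ) _ (by norm_num)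
      refine mem_sup_of _ _ _ (hWmem (C (4 : ℂ) * X 1) (C (-1 : ℂ) * X 2) (0)
        (isHomogeneous_C_mul_X _ _) (isHomogeneous_C_mul_X _ _) (hzero)) (hspanmem ![0, 2, 0, 0, 0, 0]) ?_
      norm_num [hm, Fin.sum_univ_six, cons_val_five, smul_eq_C_mul, map_ofNat, Matrix.cons_val_two, Matrix.cons_val_three, Matrix.cons_val_four, Matrix.tail_cons, Matrix.head_cons]
      try ring
    · exact absurd hd (by omega)
    · exact absurd hd (by omega)
    · exact absurd hd (by omega)
    · have e2 : v 2 = 0 := by omega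
      rw [e2]
      refine mem_sup_of _ _ _ (hWmem (0) (0) (0)
        (hzero) (hzero) (hzero)) (hspanmem ![0, 0, 1, 0, 0, 0]) ?_
      norm_num [hm, Fin.sum_univ_six, cons_val_five, smul_eq_C_mul, map_ofNat, Matrix.cons_val_two, Matrix.cons_val_three, Matrix.cons_val_four, Matrix.tail_cons, Matrix.head_cons]
      try ring
    · exact absurd hd (by omega)
    · exact absurd hd (by omega)
    · exact absurd hd (by omega)
    · exact absurd hd (by omega)
  -- Part 3
  refine ⟨key1, key2, ?_⟩
  set W' := W.comap (MvPolynomial.homogeneousSubmodule (Fin 3) ℂ 4).subtype with hW'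
  set e : Fin 6 → (MvPolynomial.homogeneousSubmodule (Fin 3) ℂ 4) := fun i => ⟨m i, hmH4 i⟩ with he
  set v : Fin 6 → ((MvPolynomial.homogeneousSubmodule (Fin 3) ℂ 4) ⧸ W') :=
    fun i => Submodule.Quotient.mk (e i) with hv
  have hli : LinearIndependent ℂ v := by
    rw [Fintype.linearIndependent_iff]
    intro g hg i
    have h0 : (∑ j, g j • e j) ∈ W' := by
      rw [← Submodule.Quotient.mk_eq_zero, ← Submodule.mkQ_apply, map_sum]
      simpa only [map_smul, Submodule.mkQ_apply] using hg
    have h1 : (∑ j, g j • m j) ∈ W := by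
      have h2 := Submodule.mem_comap.mp h0
      simpa [he] using h2
    exact congrFun (key1 g h1) i
  have hspan : ⊤ ≤ Submodule.span ℂ (Set.range v) := by
    rintro q -
    obtain ⟨⟨p, hpH4⟩, rfl⟩ := Submodule.Quotient.mk_surjective W' q
    have hsup := key2 hpH4
    rw [SetLike.mem_coe] at hsup
    obtain ⟨w, hw, s, hs, hws⟩ := Submodule.mem_sup.mp hsup
    obtain ⟨k, hk⟩ := (Submodule.mem_span_range_iff_exists_fun ℂ).mp hs
    have hsH4 : s ∈ MvPolynomial.homogeneousSubmodule (Fin 3) ℂ 4 := by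
      rw [← hk]
      exact Submodule.sum_mem _ fun i _ => Submodule.smul_mem _ _ (hmH4 i)
    have heq : (Submodule.Quotient.mk ⟨p, hpH4⟩ :
        (MvPolynomial.homogeneousSubmodule (Fin 3) ℂ 4) ⧸ W') = Submodule.Quotient.mk ⟨s, hsH4⟩ := by
      rw [Submodule.Quotient.eq]
      have hpw : p - s = w := by rw [← hws]; ring
      have : ((⟨p, hpH4⟩ - ⟨s, hsH4⟩ : (MvPolynomial.homogeneousSubmodule (Fin 3) ℂ 4)) : MvPolynomial (Fin 3) ℂ) = w := hpw
      refine Submodule.mem_comap.mpr ?_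
      rw [Submodule.subtype_apply, this]
      exact hw
    have hes : (⟨s, hsH4⟩ : (MvPolynomial.homogeneousSubmodule (Fin 3) ℂ 4)) = ∑ i, k i • e i := by
      apply Subtype.ext
      push_cast [he]
      exact hk.symm
    rw [heq, hes, ← Submodule.mkQ_apply, map_sum]
    apply Submodule.sum_mem
    intro i _
    rw [map_smul]
    exact Submodule.smul_mem _ _ (Submodule.subset_span ⟨i, rfl⟩)
  have b : Module.Basis (Fin 6) ℂ ((MvPolynomial.homogeneousSubmodule (Fin 3) ℂ 4) ⧸ W') :=
    Module.Basis.mk hli hspan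
  rw [Module.finrank_eq_card_basis b, Fintype.card_fin]
end

section
/- Let F = y⁴ + xzy² + x⁴ − z⁴ ∈ ℂ[x,y,z], F_x = y²z + 4x³, F_z = xy² − 4z³. Let V be the ℂ-span of the eight monomials x²y², xzy², z²y², x⁴, x³z, x²z², xz³, z⁴, and let W be the ℂ-span of x·F_x, z·F_x, x·F_z, z·F_z. Then W ⊆ V, and the images of the four monomials x⁴, x³z, x²z², xz³ form a basis of the quotient vector space V/W; in particular dim_ℂ(V/W) = 4. -/
open MvPolynomial

theorem indep_aux (a b d e : ℂ) (c : Fin 4 → ℂ)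
    (h : (∑ i, c i • (![X 0 ^ 4, X 0 ^ 3 * X 2, X 0 ^ 2 * X 2 ^ 2, X 0 * X 2 ^ 3] : Fin 4 → MvPolynomial (Fin 3) ℂ) i)
      = a • (X 0 * (X 1 ^ 2 * X 2 + 4 * X 0 ^ 3)) + (b • (X 2 * (X 1 ^ 2 * X 2 + 4 * X 0 ^ 3))
        + (d • (X 0 * (X 0 * X 1 ^ 2 - 4 * X 2 ^ 3)) + e • (X 2 * (X 0 * X 1 ^ 2 - 4 * X 2 ^ 3))))) :
    c = 0 := by
  have h1 := congrArg (eval ![1,1,0]) h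
  have h2 := congrArg (eval ![1,2,0]) h
  have h3 := congrArg (eval ![0,1,1]) h
  have h4 := congrArg (eval ![0,2,1]) h
  have h5 := congrArg (eval ![1,0,1]) h
  have h6 := congrArg (eval ![1,1,1]) h
  have h7 := congrArg (eval ![1,0,-1]) h
  have h8 := congrArg (eval ![1,0,2]) h
  simp [Fin.sum_univ_four, smul_eq_C_mul] at h1 h2 h3 h4 h5 h6 h7 h8
  have hd : d = 0 := by linear_combination (h1 - h2)/3
  have hb : b = 0 := by linear_combination (h3 - h4)/3
  have he : e = 0 := by linear_combination h3/4 + hb/4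
  have ha : a = 0 := by linear_combination h5 - h6 - hb - hd - he
  subst ha hb hd he
  norm_num at h1 h5 h7 h8
  have hc0 : c 0 = 0 := by linear_combination h1
  have hc1 : c 1 = 0 := by linear_combination h5 - h7/3 - h8/6 - h1/2
  have hc2 : c 2 = 0 := by linear_combination (h5 + h7)/2 - h1
  have hc3 : c 3 = 0 := by linear_combination -h5/2 - h7/6 + h8/6 + h1/2
  funext i
  fin_cases i <;> assumption

/-- With `x = X 0`, `y = X 1`, `z = X 2`, `Fx = y²z + 4x³`, `Fz = xy² − 4z³`:
let `V` be the span of `x²y², xzy², z²y², x⁴, x³z, x²z², xz³, z⁴` and `W` the span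
of `x·Fx, z·Fx, x·Fz, z·Fz`. Then `W ⊆ V` and the images of `x⁴, x³z, x²z², xz³`
form a basis of `V/W`; in particular `dim(V/W) = 4`. -/
theorem bielliptic_tangent_space_dimension
    (Fx Fz : MvPolynomial (Fin 3) ℂ)
    (hFx : Fx = X 1 ^ 2 * X 2 + 4 * X 0 ^ 3)
    (hFz : Fz = X 0 * X 1 ^ 2 - 4 * X 2 ^ 3)
    (V W : Submodule ℂ (MvPolynomial (Fin 3) ℂ))
    (hV : V = Submodule.span ℂ {X 0 ^ 2 * X 1 ^ 2, X 0 * X 2 * X 1 ^ 2,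
      X 2 ^ 2 * X 1 ^ 2, X 0 ^ 4, X 0 ^ 3 * X 2, X 0 ^ 2 * X 2 ^ 2, X 0 * X 2 ^ 3,
      X 2 ^ 4})
    (hW : W = Submodule.span ℂ {X 0 * Fx, X 2 * Fx, X 0 * Fz, X 2 * Fz})
    (n : Fin 4 → MvPolynomial (Fin 3) ℂ)
    (hn : n = ![X 0 ^ 4, X 0 ^ 3 * X 2, X 0 ^ 2 * X 2 ^ 2, X 0 * X 2 ^ 3]) :
    W ≤ V ∧
    (∀ c : Fin 4 → ℂ, (∑ i, c i • n i) ∈ W → c = 0) ∧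
    (V : Set (MvPolynomial (Fin 3) ℂ)) ⊆
      ↑(W ⊔ Submodule.span ℂ (Set.range n)) ∧
    Module.finrank ℂ (↥V ⧸ (W.comap V.subtype)) = 4 := by
  -- memberships of the eight monomials in V
  have hm1 : X 0 ^ 2 * X 1 ^ 2 ∈ V := by
    rw [hV]; exact Submodule.subset_span (Set.mem_insert _ _)
  have hm2 : X 0 * X 2 * X 1 ^ 2 ∈ V := by
    rw [hV]; exact Submodule.subset_span (Set.mem_insert_of_mem _ (Set.mem_insert _ _))
  have hm3 : X 2 ^ 2 * X 1 ^ 2 ∈ V := by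
    rw [hV]; exact Submodule.subset_span (Set.mem_insert_of_mem _ (Set.mem_insert_of_mem _ (Set.mem_insert _ _)))
  have hm4 : X 0 ^ 4 ∈ V := by
    rw [hV]; exact Submodule.subset_span (Set.mem_insert_of_mem _ (Set.mem_insert_of_mem _ (Set.mem_insert_of_mem _ (Set.mem_insert _ _))))
  have hm5 : X 0 ^ 3 * X 2 ∈ V := by
    rw [hV]; exact Submodule.subset_span (Set.mem_insert_of_mem _ (Set.mem_insert_of_mem _ (Set.mem_insert_of_mem _ (Set.mem_insert_of_mem _ (Set.mem_insert _ _)))))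
  have hm6 : X 0 ^ 2 * X 2 ^ 2 ∈ V := by
    rw [hV]; exact Submodule.subset_span (Set.mem_insert_of_mem _ (Set.mem_insert_of_mem _ (Set.mem_insert_of_mem _ (Set.mem_insert_of_mem _ (Set.mem_insert_of_mem _ (Set.mem_insert _ _))))))
  have hm7 : X 0 * X 2 ^ 3 ∈ V := by
    rw [hV]; exact Submodule.subset_span (Set.mem_insert_of_mem _ (Set.mem_insert_of_mem _ (Set.mem_insert_of_mem _ (Set.mem_insert_of_mem _ (Set.mem_insert_of_mem _ (Set.mem_insert_of_mem _ (Set.mem_insert _ _)))))))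
  have hm8 : X 2 ^ 4 ∈ V := by
    rw [hV]; exact Submodule.subset_span (Set.mem_insert_of_mem _ (Set.mem_insert_of_mem _ (Set.mem_insert_of_mem _ (Set.mem_insert_of_mem _ (Set.mem_insert_of_mem _ (Set.mem_insert_of_mem _ (Set.mem_insert_of_mem _ rfl)))))))
  -- memberships of the four generators of W
  have hg1 : X 0 * Fx ∈ W := by
    rw [hW]; exact Submodule.subset_span (Set.mem_insert _ _)
  have hg2 : X 2 * Fx ∈ W := by
    rw [hW]; exact Submodule.subset_span (Set.mem_insert_of_mem _ (Set.mem_insert _ _))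
  have hg3 : X 0 * Fz ∈ W := by
    rw [hW]; exact Submodule.subset_span (Set.mem_insert_of_mem _ (Set.mem_insert_of_mem _ (Set.mem_insert _ _)))
  have hg4 : X 2 * Fz ∈ W := by
    rw [hW]; exact Submodule.subset_span (Set.mem_insert_of_mem _ (Set.mem_insert_of_mem _ (Set.mem_insert_of_mem _ rfl)))
  have hn0 : n 0 = X 0 ^ 4 := by rw [hn]; rfl
  have hn1 : n 1 = X 0 ^ 3 * X 2 := by rw [hn]; rfl
  have hn2 : n 2 = X 0 ^ 2 * X 2 ^ 2 := by rw [hn]; rfl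
  have hn3 : n 3 = X 0 * X 2 ^ 3 := by rw [hn]; rfl
  -- part 1 : W ≤ V
  have part1 : W ≤ V := by
    rw [hW, Submodule.span_le]
    rintro p (rfl | rfl | rfl | rfl)
    · have : X 0 * Fx = X 0 * X 2 * X 1 ^ 2 + (4 : ℂ) • (X 0 ^ 4) := by
        rw [hFx, smul_eq_C_mul, map_ofNat]; ring
      rw [this]; exact V.add_mem hm2 (V.smul_mem _ hm4)
    · have : X 2 * Fx = X 2 ^ 2 * X 1 ^ 2 + (4 : ℂ) • (X 0 ^ 3 * X 2) := by
        rw [hFx, smul_eq_C_mul, map_ofNat]; ring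
      rw [this]; exact V.add_mem hm3 (V.smul_mem _ hm5)
    · have : X 0 * Fz = X 0 ^ 2 * X 1 ^ 2 + (-4 : ℂ) • (X 0 * X 2 ^ 3) := by
        rw [hFz, smul_eq_C_mul, map_neg, map_ofNat]; ring
      rw [this]; exact V.add_mem hm1 (V.smul_mem _ hm7)
    · have : X 2 * Fz = X 0 * X 2 * X 1 ^ 2 + (-4 : ℂ) • (X 2 ^ 4) := by
        rw [hFz, smul_eq_C_mul, map_neg, map_ofNat]; ring
      rw [this]; exact V.add_mem hm2 (V.smul_mem _ hm8)
  -- part 2 : independence mod W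
  have part2 : ∀ c : Fin 4 → ℂ, (∑ i, c i • n i) ∈ W → c = 0 := by
    intro c hc
    rw [hW] at hc
    rcases Submodule.mem_span_insert.mp hc with ⟨a, w1, hw1, hx1⟩
    rcases Submodule.mem_span_insert.mp hw1 with ⟨b, w2, hw2, hx2⟩
    rcases Submodule.mem_span_insert.mp hw2 with ⟨d, w3, hw3, hx3⟩
    rcases Submodule.mem_span_singleton.mp hw3 with ⟨e, hx4⟩
    have hEq : (∑ i, c i • n i)
        = a • (X 0 * Fx) + (b • (X 2 * Fx) + (d • (X 0 * Fz) + e • (X 2 * Fz))) := by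
      rw [hx1, hx2, hx3, ← hx4]
    subst hFx hFz hn
    exact indep_aux a b d e c hEq
  -- part 3 : V ≤ W ⊔ span (range n)
  have hnS : ∀ i, n i ∈ W ⊔ Submodule.span ℂ (Set.range n) := fun i =>
    Submodule.mem_sup_right (Submodule.subset_span ⟨i, rfl⟩)
  have part3 : V ≤ W ⊔ Submodule.span ℂ (Set.range n) := by
    rw [hV, Submodule.span_le]
    rintro p (rfl | rfl | rfl | rfl | rfl | rfl | rfl | rfl)
    · have : X 0 ^ 2 * X 1 ^ 2 = X 0 * Fz + (4 : ℂ) • n 3 := by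
        rw [hFz, hn3, smul_eq_C_mul, map_ofNat]; ring
      rw [this]
      exact Submodule.add_mem _ (Submodule.mem_sup_left hg3) (Submodule.smul_mem _ _ (hnS 3))
    · have : X 0 * X 2 * X 1 ^ 2 = X 0 * Fx + (-4 : ℂ) • n 0 := by
        rw [hFx, hn0, smul_eq_C_mul, map_neg, map_ofNat]; ring
      rw [this]
      exact Submodule.add_mem _ (Submodule.mem_sup_left hg1) (Submodule.smul_mem _ _ (hnS 0))
    · have : X 2 ^ 2 * X 1 ^ 2 = X 2 * Fx + (-4 : ℂ) • n 1 := by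
        rw [hFx, hn1, smul_eq_C_mul, map_neg, map_ofNat]; ring
      rw [this]
      exact Submodule.add_mem _ (Submodule.mem_sup_left hg2) (Submodule.smul_mem _ _ (hnS 1))
    · rw [← hn0]; exact hnS 0
    · rw [← hn1]; exact hnS 1
    · rw [← hn2]; exact hnS 2
    · rw [← hn3]; exact hnS 3
    · have h4m : (4 : ℂ) • (X 2 ^ 4 : MvPolynomial (Fin 3) ℂ)
          = X 0 * Fx + ((-1 : ℂ) • (X 2 * Fz) + (-4 : ℂ) • n 0) := by
        rw [hFx, hFz, hn0, smul_eq_C_mul, smul_eq_C_mul, smul_eq_C_mul,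
          map_neg, map_neg, map_ofNat, map_one]; ring
      have hrw : (X 2 ^ 4 : MvPolynomial (Fin 3) ℂ)
          = (1/4 : ℂ) • ((4 : ℂ) • (X 2 ^ 4 : MvPolynomial (Fin 3) ℂ)) := by
        rw [smul_smul]; norm_num
      rw [hrw, h4m]
      refine Submodule.smul_mem _ _ (Submodule.add_mem _ (Submodule.mem_sup_left hg1)
        (Submodule.add_mem _ (Submodule.smul_mem _ _ (Submodule.mem_sup_left hg4))
          (Submodule.smul_mem _ _ (hnS 0))))
  -- part 4 : finrank of the quotient
  have hnV : ∀ i, n i ∈ V := by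
    intro i
    rw [hn]
    fin_cases i
    exacts [hm4, hm5, hm6, hm7]
  set W' := W.comap V.subtype with hW'
  let nV : Fin 4 → V := fun i => ⟨n i, hnV i⟩
  let q : Fin 4 → (V ⧸ W') := fun i => W'.mkQ (nV i)
  have hli : LinearIndependent ℂ q := by
    rw [Fintype.linearIndependent_iff]
    intro c hc
    have h1 : W'.mkQ (∑ i, c i • nV i) = 0 := by
      rw [map_sum]; simpa [q] using hc
    rw [Submodule.mkQ_apply, Submodule.Quotient.mk_eq_zero] at h1
    have h2 : (∑ i, c i • n i) ∈ W := by
      have := h1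
      rw [Submodule.mem_comap] at this
      simpa [nV] using this
    have := part2 c h2
    intro i; rw [this]; rfl
  have hsp : ⊤ ≤ Submodule.span ℂ (Set.range q) := by
    rintro x -
    obtain ⟨v, rfl⟩ := W'.mkQ_surjective x
    have hv : (v : MvPolynomial (Fin 3) ℂ) ∈ W ⊔ Submodule.span ℂ (Set.range n) :=
      part3 v.2
    rw [Submodule.mem_sup] at hv
    obtain ⟨w, hw, s, hs, hws⟩ := hv
    obtain ⟨t, ht⟩ := (Submodule.mem_span_range_iff_exists_fun ℂ).mp hs
    have hwV : w ∈ V := part1 hw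
    have hsV : s ∈ V := by
      have : s = (v : MvPolynomial (Fin 3) ℂ) - w := by rw [← hws]; ring
      rw [this]; exact V.sub_mem v.2 hwV
    have hveq : v = (⟨w, hwV⟩ : V) + ∑ i, t i • nV i := by
      apply Subtype.ext
      push_cast [nV]
      rw [ht, hws]
    rw [hveq, map_add, map_sum]
    have hzero : W'.mkQ ⟨w, hwV⟩ = 0 := by
      rw [Submodule.mkQ_apply, Submodule.Quotient.mk_eq_zero]
      exact Submodule.mem_comap.mpr hw
    rw [hzero, zero_add]
    refine Submodule.sum_mem _ fun i _ => ?_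
    rw [map_smul]
    exact Submodule.smul_mem _ _ (Submodule.subset_span ⟨i, rfl⟩)
  have hfr : Module.finrank ℂ (V ⧸ W') = 4 := by
    rw [Module.finrank_eq_card_basis (Module.Basis.mk hli hsp), Fintype.card_fin]
  exact ⟨part1, part2, part3, hfr⟩
end

section
/- The three polynomials y²z + 4x³, 4y³ + 2xyz, xy² − 4z³ in ℂ[x,y,z] (the partial derivatives of F = y⁴ + xzy² + x⁴ − z⁴) have no common zero in ℂ³ other than the origin; consequently the plane quartic curve {F = 0} ⊂ ℙ²(ℂ) is smooth. -/
lemma quartic_key (x y z : ℂ)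
    (h1 : y ^ 2 * z + 4 * x ^ 3 = 0)
    (h2 : 4 * y ^ 3 + 2 * x * y * z = 0)
    (h3 : x * y ^ 2 - 4 * z ^ 3 = 0) :
    x = 0 ∧ y = 0 ∧ z = 0 := by
  have hy2 : y * (2 * y ^ 2 + x * z) = 0 := by linear_combination h2 / 2
  rcases mul_eq_zero.mp hy2 with hy | hxz
  · subst hy
    have hx : x = 0 := pow_eq_zero_iff (n := 3) (by norm_num) |>.mp
      (by linear_combination h1 / 4)
    have hz : z = 0 := pow_eq_zero_iff (n := 3) (by norm_num) |>.mp
      (by linear_combination -h3 / 4)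
    exact ⟨hx, rfl, hz⟩
  · have hA : 4 * x ^ 4 - 2 * y ^ 4 = 0 := by
      linear_combination x * h1 - y ^ 2 * hxz
    have hB : 4 * z ^ 4 + 2 * y ^ 4 = 0 := by
      linear_combination y ^ 2 * hxz - z * h3
    have hC : (x * z) ^ 4 - 16 * y ^ 8 = 0 := by
      linear_combination (x ^ 3 * z ^ 3 - 2 * y ^ 2 * x ^ 2 * z ^ 2 +
        4 * y ^ 4 * x * z - 8 * y ^ 6) * hxz
    have hy8 : y ^ 8 = 0 := by
      linear_combination (z ^ 4 / 65) * hA + (y ^ 4 / 130) * hB - (4 / 65) * hC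
    have hy : y = 0 := pow_eq_zero_iff (n := 8) (by norm_num) |>.mp hy8
    subst hy
    have hx : x = 0 := pow_eq_zero_iff (n := 4) (by norm_num) |>.mp
      (by linear_combination hA / 4)
    have hz : z = 0 := pow_eq_zero_iff (n := 4) (by norm_num) |>.mp
      (by linear_combination hB / 4)
    exact ⟨hx, rfl, hz⟩

/-- The partial derivatives `y²z + 4x³`, `4y³ + 2xyz`, `xy² − 4z³` of
`F = y⁴ + xzy² + x⁴ − z⁴` have no common zero in `ℂ³` other than the origin;
consequently at every point of `ℙ²(ℂ)` on the quartic curve `{F = 0}` the gradient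
of `F` is nonzero, i.e. the curve is smooth. -/
theorem bielliptic_quartic_smooth :
    (∀ v : Fin 3 → ℂ,
      v 1 ^ 2 * v 2 + 4 * v 0 ^ 3 = 0 →
      4 * v 1 ^ 3 + 2 * v 0 * v 1 * v 2 = 0 →
      v 0 * v 1 ^ 2 - 4 * v 2 ^ 3 = 0 →
      v = 0) ∧
    ∀ v : Fin 3 → ℂ, v ≠ 0 →
      v 1 ^ 4 + v 0 * v 2 * v 1 ^ 2 + v 0 ^ 4 - v 2 ^ 4 = 0 →
      ¬(v 1 ^ 2 * v 2 + 4 * v 0 ^ 3 = 0 ∧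
        4 * v 1 ^ 3 + 2 * v 0 * v 1 * v 2 = 0 ∧
        v 0 * v 1 ^ 2 - 4 * v 2 ^ 3 = 0) := by
  have main : ∀ v : Fin 3 → ℂ,
      v 1 ^ 2 * v 2 + 4 * v 0 ^ 3 = 0 →
      4 * v 1 ^ 3 + 2 * v 0 * v 1 * v 2 = 0 →
      v 0 * v 1 ^ 2 - 4 * v 2 ^ 3 = 0 → v = 0 := by
    intro v h1 h2 h3
    obtain ⟨hx, hy, hz⟩ := quartic_key (v 0) (v 1) (v 2) h1 h2 h3
    funext i
    fin_cases i <;> simpa using by assumption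
  refine ⟨main, fun v hv _ ⟨h1, h2, h3⟩ => hv (main v h1 h2 h3)⟩
end
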